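/- If there is a cofinal subset of (ω^ω, ≤*) order-isomorphic to ω_k × ω_n with k ≤ n, then 𝔟 = ℵ_k and 𝔡 = ℵ_n; moreover the image of {0} × ω_n under the isomorphism is an unbounded ω_n-chain in (ω^ω, ≤*). -/

import Mathlib

open Cardinal

universe u

/-- `f ≤* g`: eventual domination. -/
def leStar (f g : ℕ → ℕ) : Prop := {i : ℕ | ¬ f i ≤ g i}.Finite

lemma leStar_trans {f g h : ℕ → ℕ} (h1 : leStar f g) (h2 : leStar g h) : leStar f h := by
  apply Set.Finite.subset (h1.union h2)
  intro i hi
  simp only [Set.mem_setOf_eq, Set.mem_union] at *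
  by_contra hc
  push_neg at hc
  exact hi (le_trans hc.1 hc.2)

lemma aleph_nat_regular (m : ℕ) : (aleph.{u} m).IsRegular := by
  cases m with
  | zero =>
    have : ((0 : ℕ) : Ordinal) = 0 := by simp
    rw [this, Cardinal.aleph_zero]
    exact Cardinal.isRegular_aleph0
  | succ m =>
    have : ((m + 1 : ℕ) : Ordinal) = Order.succ (m : Ordinal) := by
      rw [Nat.cast_add, Nat.cast_one, Ordinal.add_one_eq_succ]
    rw [this, Cardinal.aleph_succ]
    exact Cardinal.isRegular_succ (Cardinal.aleph0_le_aleph m)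

/-- Any subset of `(aleph m).ord.ToType` of cardinality `< aleph m` has a strict
upper bound. -/
lemma bounded_of_small {m : ℕ} (s : Set ((aleph.{u} m).ord.ToType)) (h : #s < aleph m) :
    ∃ b, ∀ x ∈ s, x < b := by
  haveI : IsWellOrder ((aleph.{u} m).ord.ToType) (· < ·) := isWellOrder_lt
  have hb : ¬ IsCofinal s := fun hs => absurd (Order.cof_le hs) (not_le.mpr (by
    rw [Ordinal.cof_toType, (aleph_nat_regular m).cof_eq]; exact h))
  unfold IsCofinal at hb; push_neg at hb
  exact hb

lemma exists_gt {m : ℕ} (x : (aleph.{u} m).ord.ToType) : ∃ b, x < b := by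
  obtain ⟨b, hb⟩ := bounded_of_small {x} (by
    simp only [Cardinal.mk_singleton]
    exact lt_of_lt_of_le Cardinal.one_lt_aleph0 (Cardinal.aleph0_le_aleph _))
  exact ⟨b, hb x rfl⟩

lemma nonempty_toType (m : ℕ) : Nonempty ((aleph.{u} m).ord.ToType) := by
  obtain ⟨b, _⟩ := bounded_of_small (m := m) ∅ (by
    simp only [Cardinal.mk_eq_zero]
    exact lt_of_lt_of_le Cardinal.aleph0_pos (Cardinal.aleph0_le_aleph _))
  exact ⟨b⟩

lemma mk_toType_aleph (m : ℕ) : #((aleph.{u} m).ord.ToType) = aleph.{u} m := by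
  rw [Cardinal.mk_toType, Cardinal.card_ord]

lemma lift_aleph_nat (m : ℕ) :
    Cardinal.lift.{v, u} (aleph.{u} m) = aleph.{max u v} m := by
  rw [Cardinal.lift_aleph, Ordinal.lift_natCast]

/-- A family in `(aleph m).ord.ToType` indexed by a (Type-0) set of cardinality
`< aleph m` is strictly bounded. -/
lemma bounded_range {m : ℕ} {σ : Type} (f : σ → (aleph.{u} m).ord.ToType)
    (h : #σ < aleph.{0} m) : ∃ b, ∀ s, f s < b := by
  have hcard : #(Set.range f) < aleph.{u} m :=
    calc #(Set.range f) = Cardinal.lift.{0} #(Set.range f) := (Cardinal.lift_id' _).symm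
      _ ≤ Cardinal.lift.{u, 0} #σ := Cardinal.mk_range_le_lift
      _ < Cardinal.lift.{u, 0} (aleph.{0} m) := Cardinal.lift_lt.mpr h
      _ = aleph.{u} m := lift_aleph_nat m
  obtain ⟨b, hb⟩ := bounded_of_small (Set.range f) hcard
  exact ⟨b, fun s => hb _ (Set.mem_range_self s)⟩

/-- if (ω^ω, ≤*) has a cofinal subset order-isomorphic to ω_k × ω_n
(k ≤ n), then 𝔟 = ℵ_k and 𝔡 = ℵ_n, and the image of {0} × ω_n is an unbounded
ω_n-chain in (ω^ω, ≤*). -/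
theorem stmt17 (k n : ℕ) (hkn : k ≤ n)
    (e : (aleph k).ord.ToType × (aleph n).ord.ToType → ℕ → ℕ)
    (hinj : Function.Injective e)
    (hord : ∀ a b, a ≤ b ↔ leStar (e a) (e b))
    (hcof : ∀ f : ℕ → ℕ, ∃ x, leStar f (e x)) :
    ((∃ S : Set (ℕ → ℕ), (¬ ∃ b : ℕ → ℕ, ∀ f ∈ S, leStar f b) ∧ #S = aleph k) ∧
      ∀ S : Set (ℕ → ℕ), (¬ ∃ b : ℕ → ℕ, ∀ f ∈ S, leStar f b) → aleph k ≤ #S) ∧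
    ((∃ S : Set (ℕ → ℕ), (∀ f : ℕ → ℕ, ∃ g ∈ S, leStar f g) ∧ #S = aleph n) ∧
      ∀ S : Set (ℕ → ℕ), (∀ f : ℕ → ℕ, ∃ g ∈ S, leStar f g) → aleph n ≤ #S) ∧
    ∀ x0 : (aleph k).ord.ToType, (∀ w, x0 ≤ w) →
      (¬ ∃ b : ℕ → ℕ, ∀ β : (aleph n).ord.ToType, leStar (e (x0, β)) b) ∧
      Function.Injective (fun β : (aleph n).ord.ToType => e (x0, β)) ∧
      ∀ β β' : (aleph n).ord.ToType, β ≤ β' → leStar (e (x0, β)) (e (x0, β')) := by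
  obtain ⟨β0⟩ := nonempty_toType n
  obtain ⟨α0⟩ := nonempty_toType k
  have hknO : (k : Ordinal) ≤ (n : Ordinal) := by exact_mod_cast hkn
  refine ⟨⟨?_, ?_⟩, ⟨?_, ?_⟩, ?_⟩
  · -- unbounded family of size aleph k
    refine ⟨Set.range (fun α : (aleph k).ord.ToType => e (α, β0)), ?_, ?_⟩
    · rintro ⟨b, hb⟩
      obtain ⟨⟨α1, β1⟩, hx⟩ := hcof b
      obtain ⟨α2, hα2⟩ := exists_gt α1
      have h1 : leStar (e (α2, β0)) (e (α1, β1)) :=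
        leStar_trans (hb _ (Set.mem_range_self α2)) hx
      have := ((hord _ _).mpr h1).1
      exact absurd this (not_le.mpr hα2)
    · have hinj' : Function.Injective (fun α : (aleph k).ord.ToType => e (α, β0)) := by
        intro a b hab
        have := hinj hab
        exact (Prod.mk.injEq _ _ _ _ ▸ this).1
      apply Cardinal.lift_injective
      rw [Cardinal.mk_range_eq_of_injective hinj', mk_toType_aleph, lift_aleph_nat,
        lift_aleph_nat]
  · -- every unbounded family has size ≥ aleph k
    intro S hS
    by_contra hlt
    push_neg at hlt
    apply hS
    choose x hx using fun f : S => hcof f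
    obtain ⟨α1, hα1⟩ := bounded_range (fun f : S => (x f).1) hlt
    obtain ⟨β1, hβ1⟩ := bounded_range (fun f : S => (x f).2)
      (lt_of_lt_of_le hlt (Cardinal.aleph_le_aleph.mpr hknO))
    refine ⟨e (α1, β1), fun f hf => ?_⟩
    refine leStar_trans (hx ⟨f, hf⟩) ((hord _ _).mp ?_)
    exact ⟨(hα1 ⟨f, hf⟩).le, (hβ1 ⟨f, hf⟩).le⟩
  · -- dominating family of size aleph n
    refine ⟨Set.range e, fun f => ?_, ?_⟩
    · obtain ⟨x, hx⟩ := hcof f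
      exact ⟨e x, Set.mem_range_self x, hx⟩
    · apply Cardinal.lift_injective
      rw [Cardinal.mk_range_eq_of_injective hinj, Cardinal.mk_prod,
        mk_toType_aleph, mk_toType_aleph, lift_aleph_nat, lift_aleph_nat, lift_aleph_nat,
        Cardinal.mul_eq_max (Cardinal.aleph0_le_aleph _) (Cardinal.aleph0_le_aleph _),
        sup_eq_right.mpr (Cardinal.aleph_le_aleph.mpr (show ((k : Ordinal) ≤ (n : Ordinal)) by exact_mod_cast hkn)), lift_aleph_nat]
  · -- every dominating family has size ≥ aleph n
    intro S hS
    by_contra hlt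
    push_neg at hlt
    choose x hx using fun f : S => hcof f
    obtain ⟨β1, hβ1⟩ := bounded_range (fun f : S => (x f).2) hlt
    obtain ⟨f, hf, hdom⟩ := hS (e (α0, β1))
    have h1 : leStar (e (α0, β1)) (e (x ⟨f, hf⟩)) := leStar_trans hdom (hx ⟨f, hf⟩)
    have h2 := ((hord _ _).mpr h1).2
    exact absurd h2 (not_le.mpr (hβ1 ⟨f, hf⟩))
  · -- the chain
    intro x0 _
    refine ⟨?_, ?_, ?_⟩
    · rintro ⟨b, hb⟩
      obtain ⟨⟨α1, β1⟩, hx⟩ := hcof b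
      obtain ⟨β2, hβ2⟩ := exists_gt β1
      have h1 : leStar (e (x0, β2)) (e (α1, β1)) := leStar_trans (hb β2) hx
      exact absurd ((hord _ _).mpr h1).2 (not_le.mpr hβ2)
    · intro a b hab
      have := hinj hab
      exact (Prod.mk.injEq _ _ _ _ ▸ this).2
    · intro β β' hββ'
      exact (hord _ _).mp ⟨le_refl x0, hββ'⟩
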